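/- Let f(x) = a_0 x^n + ... + a_n be a real polynomial of degree n, let 2 ≤ M ≤ n, and suppose all the leading coefficients h_0, h_1, ..., h_n of the polynomials f_0, ..., f_n produced by the generalized Euclidean algorithm with step M are positive. Let z be a nonzero complex number with 0 ≤ arg z < π/M. Then f_k(z) ≠ 0 for every k = 0, 1, ..., n, and, setting w_i := f_{n−i}(z)/f_{n−i+1}(z) for i = 1, ..., n, S(n) := {n−(M−2), ..., n}, S_+(n) := {i ∈ S(n) : arg w_i ≥ 0}, and S_−(n) := {i ∈ S(n) : arg w_i < 0}, one has |Σ_{i ∈ S_+(n)} arg w_i| ≤ π(M−1)/M and |Σ_{i ∈ S_−(n)} arg w_i| ≤ π(M−1)/M. -/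

import Mathlib

open Polynomial

/-- The arithmetic part `f_j` of the polynomial with coefficients `a_0,...,a_n`:
`f_j(x) = Σ_{0 ≤ l ≤ n, l ≡ j (mod M)} a_l x^(n-l)`. -/
noncomputable def geaInit (a : ℕ → ℝ) (n M j : ℕ) : Polynomial ℝ :=
  ∑ l ∈ Finset.range (n + 1), if l % M = j then C (a l) * X ^ (n - l) else 0

/-- The polynomials `f_0, f_1, ..., f_n` of the generalized Euclidean algorithm with step `M`:
`f_i = d_i f_{i+1} + f_{i+M}` where `d_i = f_i / f_{i+1}` and `f_{i+M} = f_i % f_{i+1}`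
(Euclidean division of polynomials). -/
noncomputable def gea (a : ℕ → ℝ) (n M : ℕ) : ℕ → Polynomial ℝ
  | i =>
    if _h : i < M then geaInit a n M i
    else if _h2 : 2 ≤ M then
      gea a n M (i - M) % gea a n M (i - M + 1)
    else 0
  termination_by i => i
  decreasing_by all_goals omega

lemma gea_lt (a : ℕ → ℝ) (n M i : ℕ) (h : i < M) : gea a n M i = geaInit a n M i := by
  rw [gea]; simp [h]

lemma gea_ge (a : ℕ → ℝ) (n M i : ℕ) (h2 : 2 ≤ M) (h : ¬ i < M) :
    gea a n M i = gea a n M (i - M) % gea a n M (i - M + 1) := by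
  rw [gea]; simp [h, h2]


/-- Uniqueness of Euclidean division for real polynomials. -/
lemma mod_unique {q p d r : Polynomial ℝ} (hq : q ≠ 0)
    (h : p = q * d + r) (hdeg : r.degree < q.degree) : p % q = r := by
  have h1 : q * (p / q) + p % q = p := EuclideanDomain.div_add_mod p q
  have h2 : q * (d - p / q) = p % q - r := by
    rw [mul_sub]; linear_combination -h - h1
  by_cases hd : d - p / q = 0
  · have : p % q - r = 0 := by rw [← h2, hd, mul_zero]
    linear_combination this
  · exfalso
    have hlt : (p % q - r).degree < q.degree :=
      lt_of_le_of_lt (degree_sub_le _ _) (max_lt (EuclideanDomain.mod_lt _ hq) hdeg)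
    rw [← h2, degree_mul] at hlt
    have := degree_eq_natDegree hd
    have hq' := degree_eq_natDegree hq
    rw [hq', this] at hlt
    norm_cast at hlt
    omega

/-- Structured division: if dividend and divisor have supports in fixed residue
classes mod M, so does the remainder. -/
lemma exists_structured_div (M : ℕ) (hM : 2 ≤ M) (n c₁ c₂ : ℕ) (q : Polynomial ℝ) (hq : q ≠ 0)
    (hqc : ∀ e ∈ q.support, e + c₂ ≡ n [MOD M]) :
    ∀ N : ℕ, ∀ p : Polynomial ℝ, p.natDegree ≤ N → (∀ e ∈ p.support, e + c₁ ≡ n [MOD M]) →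
      ∃ d r : Polynomial ℝ, p = q * d + r ∧ r.degree < q.degree ∧
        (∀ e ∈ r.support, e + c₁ ≡ n [MOD M]) := by
  intro N
  induction N using Nat.strong_induction_on with
  | _ N ih =>
    intro p hpN hpc
    by_cases hlt : p.degree < q.degree
    · exact ⟨0, p, by ring, hlt, hpc⟩
    · push_neg at hlt
      have hp0 : p ≠ 0 := by
        intro h0; rw [h0] at hlt; simp at hlt
        exact hq hlt
      set t : ℝ := p.leadingCoeff / q.leadingCoeff with ht
      set E : ℕ := p.natDegree - q.natDegree with hE
      have hdle : q.natDegree ≤ p.natDegree := natDegree_le_natDegree hlt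
      set p₁ : Polynomial ℝ := p - C t * X ^ E * q with hp₁
      have hne : (C t * X ^ E * q).leadingCoeff = p.leadingCoeff := by
        rw [leadingCoeff_mul, leadingCoeff_mul, leadingCoeff_C, leadingCoeff_X_pow, mul_one,
          ht, div_mul_cancel₀]
        exact leadingCoeff_ne_zero.mpr hq
      have hdeq : (C t * X ^ E * q).degree = p.degree := by
        have ht0 : t ≠ 0 := by
          rw [ht]
          exact div_ne_zero (leadingCoeff_ne_zero.mpr hp0) (leadingCoeff_ne_zero.mpr hq)
        rw [degree_mul, degree_mul, degree_C ht0, degree_X_pow, zero_add,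
          degree_eq_natDegree hq, degree_eq_natDegree hp0]
        norm_cast
        omega
      have hdlt : p₁.degree < p.degree := by
        rw [hp₁]
        exact degree_sub_lt hdeq.symm hp0 hne.symm
      -- support of p₁
      have hp₁c : ∀ e ∈ p₁.support, e + c₁ ≡ n [MOD M] := by
        intro e he
        have hco : p₁.coeff e ≠ 0 := mem_support_iff.mp he
        rw [hp₁, coeff_sub] at hco
        by_cases hpe : p.coeff e = 0
        case neg => exact hpc e (mem_support_iff.mpr hpe)
        case pos =>
          have h : e ∈ (C t * X ^ E * q).support := by
            rw [mem_support_iff]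
            intro hh; rw [hpe, hh] at hco; exact hco (by ring)
          have hsub : (C t * X ^ E * q).support ⊆ Finset.image (fun x => E + x) q.support := by
            intro x hx
            have hx' : (q * C t * X ^ E).coeff x ≠ 0 := by
              have := mem_support_iff.mp hx
              rwa [show C t * X ^ E * q = q * C t * X ^ E by ring] at this
            rw [coeff_mul_X_pow'] at hx'
            by_cases hxE : E ≤ x
            · rw [if_pos hxE, coeff_mul_C] at hx'
              exact Finset.mem_image.mpr ⟨x - E,
                mem_support_iff.mpr (fun hh => hx' (by rw [hh, zero_mul])), by omega⟩
            · rw [if_neg hxE] at hx'; exact absurd rfl hx'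
          have := hsub h
          rw [Finset.mem_image] at this
          obtain ⟨e', he', rfl⟩ := this
          -- (E + e') + c₁ ≡ n [MOD M]
          have h1 : p.natDegree + c₁ ≡ n [MOD M] :=
            hpc _ (natDegree_mem_support_of_nonzero hp0)
          have h2 : q.natDegree + c₂ ≡ n [MOD M] :=
            hqc _ (natDegree_mem_support_of_nonzero hq)
          have h3 : e' + c₂ ≡ n [MOD M] := hqc _ he'
          have key : (E + e' + c₁) + (q.natDegree + c₂) ≡ n + (q.natDegree + c₂) [MOD M] := by
            have : E + e' + c₁ + (q.natDegree + c₂) = (p.natDegree + c₁) + (e' + c₂) := by omega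
            rw [this]
            calc (p.natDegree + c₁) + (e' + c₂) ≡ n + (e' + c₂) [MOD M] := h1.add_right _
              _ ≡ n + n [MOD M] := h3.add_left _
              _ ≡ n + (q.natDegree + c₂) [MOD M] := (h2.add_left _).symm
          exact key.add_right_cancel' _
      by_cases hp₁0 : p₁ = 0
      · refine ⟨C t * X ^ E, 0, ?_, ?_, by simp⟩
        · have : p - C t * X ^ E * q = 0 := by rw [← hp₁, hp₁0]
          rw [add_zero, mul_comm]; linear_combination this
        · rw [degree_zero]; exact bot_lt_iff_ne_bot.mpr (degree_eq_bot.not.mpr hq)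
      · have hN : p₁.natDegree < N :=
          lt_of_lt_of_le (natDegree_lt_natDegree hp₁0 hdlt) hpN
        obtain ⟨d₁, r₁, heq, hdeg, hrc⟩ := ih p₁.natDegree hN p₁ le_rfl hp₁c
        refine ⟨d₁ + C t * X ^ E, r₁, ?_, hdeg, hrc⟩
        rw [mul_add]
        have : p₁ = p - C t * X ^ E * q := hp₁
        rw [this] at heq
        linear_combination heq

lemma mod_structured (M : ℕ) (hM : 2 ≤ M) (n c₁ c₂ : ℕ) (p q : Polynomial ℝ) (hq : q ≠ 0)
    (hpc : ∀ e ∈ p.support, e + c₁ ≡ n [MOD M])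
    (hqc : ∀ e ∈ q.support, e + c₂ ≡ n [MOD M]) :
    ∀ e ∈ (p % q).support, e + c₁ ≡ n [MOD M] := by
  obtain ⟨d, r, heq, hdeg, hrc⟩ :=
    exists_structured_div M hM n c₁ c₂ q hq hqc p.natDegree p le_rfl hpc
  rwa [mod_unique hq heq hdeg]

section Chain

variable (a : ℕ → ℝ) (n M : ℕ)


variable (hM : 2 ≤ M) (hMn : M ≤ n)
  (hpos : ∀ i ≤ n, 0 < (gea a n M i).leadingCoeff)

include hM hMn hpos

lemma gea_ne_zero (i : ℕ) (hi : i ≤ n) : gea a n M i ≠ 0 :=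
  leadingCoeff_ne_zero.mp (ne_of_gt (hpos i hi))

lemma gea_class : ∀ i ≤ n, ∀ e ∈ (gea a n M i).support, e + i ≡ n [MOD M] := by
  intro i
  induction i using Nat.strong_induction_on with
  | _ i ih =>
    intro hi e he
    by_cases hiM : i < M
    · rw [gea_lt a n M i hiM, geaInit] at he
      have hco := mem_support_iff.mp he
      rw [finset_sum_coeff] at hco
      obtain ⟨l, hl, hne⟩ := Finset.exists_ne_zero_of_sum_ne_zero hco
      rw [Finset.mem_range] at hl
      by_cases hlM : l % M = i
      · rw [if_pos hlM, coeff_C_mul, coeff_X_pow] at hne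
        have he' : e = n - l := by
          by_contra hc
          rw [if_neg hc] at hne
          exact hne (mul_zero _)
        have hlmod : l ≡ i [MOD M] := by
          unfold Nat.ModEq; rw [hlM, Nat.mod_eq_of_lt hiM]
        have key : (e + i) + l ≡ n + l [MOD M] := by
          have h1 : e + i + l = n + i := by omega
          rw [h1]
          exact (hlmod.symm).add_left n
        exact key.add_right_cancel' _
      · rw [if_neg hlM] at hne; exact absurd rfl hne
    · push_neg at hiM
      rw [gea_ge a n M i hM (not_lt.mpr hiM)] at he
      have h1 : i - M + 1 ≤ n := by omega
      have h2 : i - M < i := by omega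
      have h3 : i - M + 1 < i := by omega
      have hq := gea_ne_zero a n M hM hMn hpos (i - M + 1) h1
      have hcl := mod_structured M hM n (i - M) (i - M + 1)
        (gea a n M (i - M)) (gea a n M (i - M + 1)) hq
        (ih (i - M) h2 (by omega)) (ih (i - M + 1) h3 h1) e he
      have : e + i = (e + (i - M)) + M := by omega
      rw [this]
      calc e + (i - M) + M ≡ e + (i - M) [MOD M] := by
            unfold Nat.ModEq; rw [Nat.add_mod_right]
        _ ≡ n [MOD M] := hcl

lemma gea_deg_le : ∀ i ≤ n, (gea a n M i).natDegree + i ≤ n := by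
  intro i
  induction i using Nat.strong_induction_on with
  | _ i ih =>
    intro hi
    by_cases hiM : i < M
    · have hd : (gea a n M i).degree ≤ ((n - i : ℕ) : WithBot ℕ) := by
        rw [gea_lt a n M i hiM, geaInit]
        refine le_trans (degree_sum_le _ _) ?_
        rw [Finset.sup_le_iff]
        intro l hl
        rw [Finset.mem_range] at hl
        by_cases hlM : l % M = i
        · rw [if_pos hlM]
          refine le_trans (degree_C_mul_X_pow_le _ _) ?_
          have hil : i ≤ l := hlM ▸ Nat.mod_le l M
          have h2 : n - l ≤ n - i := by omega
          exact_mod_cast h2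
        · rw [if_neg hlM, degree_zero]; exact bot_le
      have := natDegree_le_of_degree_le hd
      omega
    · push_neg at hiM
      have h1 : i - M + 1 ≤ n := by omega
      have hp0 : gea a n M i ≠ 0 := gea_ne_zero a n M hM hMn hpos i hi
      have hq0 : gea a n M (i - M + 1) ≠ 0 := gea_ne_zero a n M hM hMn hpos _ h1
      have hlt : (gea a n M i).degree < (gea a n M (i - M + 1)).degree := by
        rw [gea_ge a n M i hM (not_lt.mpr hiM)]
        exact EuclideanDomain.mod_lt _ hq0
      have hnd : (gea a n M i).natDegree < (gea a n M (i - M + 1)).natDegree :=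
        natDegree_lt_natDegree hp0 hlt
      have hih := ih (i - M + 1) (by omega) h1
      have hcl : (gea a n M i).natDegree + i ≡ n [MOD M] :=
        gea_class a n M hM hMn hpos i hi _ (natDegree_mem_support_of_nonzero hp0)
      by_contra hc
      push_neg at hc
      have hdvd : M ∣ ((gea a n M i).natDegree + i) - n :=
        (Nat.modEq_iff_dvd' (by omega)).mp hcl.symm
      have := Nat.le_of_dvd (by omega) hdvd
      omega

lemma gea_deg_eq (ha0 : a 0 ≠ 0) : ∀ i ≤ n, (gea a n M i).natDegree + i = n := by
  have base : (gea a n M 0).natDegree = n := by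
    have hco : (gea a n M 0).coeff n = a 0 := by
      rw [gea_lt a n M 0 (by omega), geaInit, finset_sum_coeff]
      rw [Finset.sum_eq_single 0]
      · simp
      · intro l hl hl0
        by_cases hlM : l % M = 0
        · rw [if_pos hlM, coeff_C_mul, coeff_X_pow, if_neg (by rw [Finset.mem_range] at hl; omega),
            mul_zero]
        · rw [if_neg hlM, coeff_zero]
      · intro h; exact absurd (Finset.mem_range.mpr (by omega)) h
    have h1 : n ≤ (gea a n M 0).natDegree := le_natDegree_of_ne_zero (hco ▸ ha0)
    have h2 := gea_deg_le a n M hM hMn hpos 0 (by omega)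
    omega
  suffices H : ∀ j : ℕ, ∀ i ≤ n, i + j = n → (gea a n M i).natDegree + i = n by
    intro i hi; exact H (n - i) i hi (by omega)
  intro j
  induction j using Nat.strong_induction_on with
  | _ j ih =>
    intro i hi hij
    rcases Nat.eq_zero_or_pos i with rfl | hi1
    · simp [base]
    by_cases htail : n < i + M - 1
    · have h2 := gea_deg_le a n M hM hMn hpos i hi
      have hp0 : gea a n M i ≠ 0 := gea_ne_zero a n M hM hMn hpos i hi
      have hcl : (gea a n M i).natDegree + i ≡ n [MOD M] :=
        gea_class a n M hM hMn hpos i hi _ (natDegree_mem_support_of_nonzero hp0)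
      have hdvd : M ∣ n - ((gea a n M i).natDegree + i) :=
        (Nat.modEq_iff_dvd' h2).mp hcl
      rcases Nat.eq_zero_or_pos (n - ((gea a n M i).natDegree + i)) with h0 | hgt
      · omega
      · have := Nat.le_of_dvd hgt hdvd; omega
    · push_neg at htail
      obtain ⟨i', rfl⟩ : ∃ i', i = i' + 1 := ⟨i - 1, by omega⟩
      have hin : i' + M ≤ n := by omega
      have hgeq : gea a n M (i' + M) = gea a n M i' % gea a n M (i' + 1) := by
        rw [gea_ge a n M (i' + M) hM (by omega)]
        congr 2 <;> omega
      have hq0 : gea a n M (i' + 1) ≠ 0 := gea_ne_zero a n M hM hMn hpos _ hi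
      have hr0 : gea a n M (i' + M) ≠ 0 := gea_ne_zero a n M hM hMn hpos _ hin
      have hlt : (gea a n M (i' + M)).degree < (gea a n M (i' + 1)).degree := by
        rw [hgeq]; exact EuclideanDomain.mod_lt _ hq0
      have hnd : (gea a n M (i' + M)).natDegree < (gea a n M (i' + 1)).natDegree :=
        natDegree_lt_natDegree hr0 hlt
      have hih : (gea a n M (i' + M)).natDegree + (i' + M) = n :=
        ih (n - (i' + M)) (by omega) (i' + M) hin (by omega)
      have hclx : (gea a n M (i' + M)).natDegree + (i' + M) ≡ n [MOD M] :=
        gea_class a n M hM hMn hpos _ hin _ (natDegree_mem_support_of_nonzero hr0)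
      have hcly : (gea a n M (i' + 1)).natDegree + (i' + 1) ≡ n [MOD M] :=
        gea_class a n M hM hMn hpos _ hi _ (natDegree_mem_support_of_nonzero hq0)
      set x := (gea a n M (i' + M)).natDegree with hx
      set y := (gea a n M (i' + 1)).natDegree with hy
      have hxy : x + (i' + M) ≡ y + (i' + 1) [MOD M] := hclx.trans hcly.symm
      have hxy3 : x + M ≡ y + 1 [MOD M] := by
        have e1 : x + (i' + M) = (x + M) + i' := by omega
        have e2 : y + (i' + 1) = (y + 1) + i' := by omega
        rw [e1, e2] at hxy
        exact hxy.add_right_cancel' i'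
      have h2 := gea_deg_le a n M hM hMn hpos (i' + 1) hi
      obtain ⟨t, ht⟩ := hxy3.dvd
      push_cast at ht
      have hxy' : (x:ℤ) + 1 ≤ y := by exact_mod_cast hnd
      have hMpos : (0:ℤ) < M := by exact_mod_cast (show 0 < M by omega)
      have hih' : (x:ℤ) + (i' + M) = n := by exact_mod_cast hih
      have h2' : (y:ℤ) + (i' + 1) ≤ n := by exact_mod_cast h2
      have ht0 : t = 0 := by
        rcases lt_trichotomy t 0 with h | h | h
        · exfalso
          have : (M:ℤ) * t ≤ -M := by nlinarith
          linarith
        · exact h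
        · exfalso
          have : (M:ℤ) * t ≥ M := by nlinarith
          linarith
      rw [ht0, mul_zero] at ht
      omega

lemma gea_tail (ha0 : a 0 ≠ 0) (i : ℕ) (hi : i ≤ n) (hti : n < i + M) :
    gea a n M i = C ((gea a n M i).leadingCoeff) * X ^ (n - i) := by
  have hdeg : (gea a n M i).natDegree = n - i := by
    have := gea_deg_eq a n M hM hMn hpos ha0 i hi; omega
  ext m
  rw [coeff_C_mul, coeff_X_pow]
  by_cases hm : m = n - i
  · rw [if_pos hm, mul_one, hm, ← hdeg, coeff_natDegree]
  · rw [if_neg hm, mul_zero]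
    by_contra hc
    have hmem : m ∈ (gea a n M i).support := mem_support_iff.mpr hc
    have hcl : m + i ≡ n [MOD M] := gea_class a n M hM hMn hpos i hi m hmem
    have hle : m ≤ n - i := hdeg ▸ le_natDegree_of_ne_zero hc
    have hdvd : M ∣ n - (m + i) := (Nat.modEq_iff_dvd' (by omega)).mp hcl
    rcases Nat.eq_zero_or_pos (n - (m + i)) with h0 | hgt
    · omega
    · have := Nat.le_of_dvd hgt hdvd; omega

lemma gea_step (ha0 : a 0 ≠ 0) (i : ℕ) (hi : i + M ≤ n) :
    gea a n M i =
      C ((gea a n M i).leadingCoeff / (gea a n M (i + 1)).leadingCoeff) * X * gea a n M (i + 1)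
        + gea a n M (i + M) := by
  have hdi : (gea a n M i).natDegree = n - i := by
    have := gea_deg_eq a n M hM hMn hpos ha0 i (by omega); omega
  have hdi1 : (gea a n M (i + 1)).natDegree = n - i - 1 := by
    have := gea_deg_eq a n M hM hMn hpos ha0 (i + 1) (by omega); omega
  have hq0 : gea a n M (i + 1) ≠ 0 := gea_ne_zero a n M hM hMn hpos _ (by omega)
  set c : ℝ := (gea a n M i).leadingCoeff / (gea a n M (i + 1)).leadingCoeff with hc
  set r : Polynomial ℝ := gea a n M i - C c * X * gea a n M (i + 1) with hr
  have hdr : r.degree < (gea a n M (i + 1)).degree := by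
    rw [degree_eq_natDegree hq0, hdi1]
    rw [degree_lt_iff_coeff_zero]
    intro m hm
    have hm1 : 1 ≤ m := by omega
    have hcoeff : (C c * X * gea a n M (i + 1)).coeff m = c * (gea a n M (i + 1)).coeff (m - 1) := by
      have hXc : (X * gea a n M (i + 1)).coeff m = (gea a n M (i + 1)).coeff (m - 1) := by
        nth_rewrite 1 [show m = (m - 1) + 1 by omega]
        exact coeff_X_mul _ _
      rw [mul_assoc, coeff_C_mul, hXc]
    rw [hr, coeff_sub, hcoeff]
    rcases lt_trichotomy m (n - i) with h | h | h
    · -- m = n - i - 1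
      have hm' : m = n - i - 1 := by omega
      have hz1 : (gea a n M i).coeff m = 0 := by
        by_contra hcne
        have hcl : m + i ≡ n [MOD M] :=
          gea_class a n M hM hMn hpos i (by omega) m (mem_support_iff.mpr hcne)
        have hdvd : M ∣ n - (m + i) := (Nat.modEq_iff_dvd' (by omega)).mp hcl
        rcases Nat.eq_zero_or_pos (n - (m + i)) with h0 | hgt
        · omega
        · have := Nat.le_of_dvd hgt hdvd; omega
      have hz2 : (gea a n M (i + 1)).coeff (m - 1) = 0 := by
        by_contra hcne
        have hcl : (m - 1) + (i + 1) ≡ n [MOD M] :=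
          gea_class a n M hM hMn hpos (i + 1) (by omega) _ (mem_support_iff.mpr hcne)
        have hdvd : M ∣ n - ((m - 1) + (i + 1)) := (Nat.modEq_iff_dvd' (by omega)).mp hcl
        rcases Nat.eq_zero_or_pos (n - ((m - 1) + (i + 1))) with h0 | hgt
        · omega
        · have := Nat.le_of_dvd hgt hdvd; omega
      rw [hz1, hz2, mul_zero, sub_zero]
    · -- m = n - i : leading coefficients cancel
      have e1 : (gea a n M i).coeff m = (gea a n M i).leadingCoeff := by
        rw [← hdi, h] at *
        rw [h, ← hdi, coeff_natDegree]
      have e2 : (gea a n M (i + 1)).coeff (m - 1) = (gea a n M (i + 1)).leadingCoeff := by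
        have : m - 1 = (gea a n M (i + 1)).natDegree := by omega
        rw [this, coeff_natDegree]
      rw [e1, e2, hc, div_mul_cancel₀ _ (leadingCoeff_ne_zero.mpr hq0), sub_self]
    · -- m > n - i : both vanish by degree
      have hz1 : (gea a n M i).coeff m = 0 :=
        coeff_eq_zero_of_natDegree_lt (by omega)
      have hz2 : (gea a n M (i + 1)).coeff (m - 1) = 0 :=
        coeff_eq_zero_of_natDegree_lt (by omega)
      rw [hz1, hz2, mul_zero, sub_zero]
  have hmod : gea a n M i % gea a n M (i + 1) = r :=
    mod_unique hq0 (d := C c * X) (by rw [hr]; ring) hdr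
  have hgeq : gea a n M (i + M) = gea a n M i % gea a n M (i + 1) := by
    rw [gea_ge a n M (i + M) hM (by omega)]
    congr 2 <;> omega
  rw [hgeq, hmod, hr]; ring

end Chain

section ComplexHelpers
open Complex

/-- `φ` is an argument of the (nonzero) complex number `x`. -/
def HasArg (x : ℂ) (φ : ℝ) : Prop :=
  ∃ r : ℝ, 0 < r ∧ x = (r : ℂ) * Complex.exp (φ * Complex.I)

lemma hasArg_arg {x : ℂ} (hx : x ≠ 0) : HasArg x x.arg :=
  ⟨‖x‖, norm_pos_iff.mpr hx, (norm_mul_exp_arg_mul_I x).symm⟩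

lemma hasArg_ne_zero {x : ℂ} {φ : ℝ} (h : HasArg x φ) : x ≠ 0 := by
  obtain ⟨r, hr, rfl⟩ := h
  exact mul_ne_zero (by exact_mod_cast ne_of_gt hr) (Complex.exp_ne_zero _)

lemma arg_eq_of_hasArg {x : ℂ} {φ : ℝ} (h : HasArg x φ)
    (h1 : -Real.pi < φ) (h2 : φ ≤ Real.pi) : x.arg = φ := by
  obtain ⟨r, hr, rfl⟩ := h
  rw [arg_real_mul _ hr, exp_mul_I]
  exact arg_cos_add_sin_mul_I ⟨h1, h2⟩

lemma hasArg_mul {x y : ℂ} {φ ψ : ℝ} (hx : HasArg x φ) (hy : HasArg y ψ) :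
    HasArg (x * y) (φ + ψ) := by
  obtain ⟨r, hr, rfl⟩ := hx
  obtain ⟨t, ht, rfl⟩ := hy
  refine ⟨r * t, mul_pos hr ht, ?_⟩
  have he : Complex.exp (((φ + ψ : ℝ) : ℂ) * I) =
      Complex.exp ((φ : ℂ) * I) * Complex.exp ((ψ : ℂ) * I) := by
    rw [← Complex.exp_add]; congr 1; push_cast; ring
  rw [he]; push_cast; ring

lemma hasArg_div {x y : ℂ} {φ ψ : ℝ} (hx : HasArg x φ) (hy : HasArg y ψ) :
    HasArg (x / y) (φ - ψ) := by
  obtain ⟨r, hr, rfl⟩ := hx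
  obtain ⟨t, ht, rfl⟩ := hy
  refine ⟨r / t, div_pos hr ht, ?_⟩
  have he : Complex.exp (ψ * I) ≠ 0 := Complex.exp_ne_zero _
  have ht0 : (t : ℂ) ≠ 0 := by exact_mod_cast ne_of_gt ht
  have hsplit : Complex.exp ((φ : ℂ) * I) =
      Complex.exp (((φ - ψ : ℝ) : ℂ) * I) * Complex.exp ((ψ : ℂ) * I) := by
    rw [← Complex.exp_add]; congr 1; push_cast; ring
  rw [hsplit]
  push_cast
  field_simp

lemma hasArg_pow {x : ℂ} {φ : ℝ} (hx : HasArg x φ) (k : ℕ) : HasArg (x ^ k) (k * φ) := by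
  induction k with
  | zero => exact ⟨1, one_pos, by simp⟩
  | succ k ih =>
    have h2 := hasArg_mul ih hx
    rw [← pow_succ] at h2
    have : (k : ℝ) * φ + φ = ((k + 1 : ℕ) : ℝ) * φ := by push_cast; ring
    rwa [this] at h2

lemma hasArg_pos_mul {x : ℂ} {φ : ℝ} {h : ℝ} (hh : 0 < h) (hx : HasArg x φ) :
    HasArg ((h : ℂ) * x) φ := by
  obtain ⟨r, hr, rfl⟩ := hx
  exact ⟨h * r, mul_pos hh hr, by push_cast; ring⟩

lemma exp_ofReal_mul_I_im' (x : ℝ) : (Complex.exp ((x : ℂ) * I)).im = Real.sin x :=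
  Complex.exp_ofReal_mul_I_im x

/-- Sum of two nonzero complex vectors whose argument gap lies in `[0, π)`. -/
lemma hasArg_add {u v : ℂ} {φ₁ φ₂ : ℝ}
    (h1 : HasArg u φ₁) (h2 : HasArg v φ₂) (hd0 : φ₂ ≤ φ₁) (hdπ : φ₁ - φ₂ < Real.pi) :
    u + v ≠ 0 ∧ 0 ≤ ((u + v) / v).arg ∧ ((u + v) / v).arg ≤ φ₁ - φ₂ ∧
      HasArg (u + v) (φ₂ + ((u + v) / v).arg) := by
  have hv : v ≠ 0 := hasArg_ne_zero h2
  have hq : HasArg (u / v) (φ₁ - φ₂) := hasArg_div h1 h2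
  set d : ℝ := φ₁ - φ₂ with hd
  set q : ℂ := u / v with hqdef
  obtain ⟨r, hr, hqe⟩ := hq
  have hquv : (u + v) / v = 1 + q := by
    rw [add_div, div_self hv, hqdef]; ring
  have him : (1 + q).im = r * Real.sin d := by
    rw [hqe]
    simp [Complex.add_im, Complex.one_im, Complex.mul_im, Complex.ofReal_re, Complex.ofReal_im,
      exp_ofReal_mul_I_im']
  have hsind : 0 ≤ Real.sin d :=
    Real.sin_nonneg_of_nonneg_of_le_pi (by linarith) (by linarith)
  have h1q0 : 1 + q ≠ 0 := by
    rcases eq_or_lt_of_le (by linarith : (0:ℝ) ≤ d) with hd0' | hd0'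
    · have hqr : q = (r : ℂ) := by
        rw [hqe, ← hd0']; simp
      rw [hqr]
      intro hc
      have := congrArg Complex.re hc
      simp at this
      linarith
    · intro hc
      rw [hc] at him
      have hsd : Real.sin d > 0 := Real.sin_pos_of_pos_of_lt_pi hd0' (by linarith)
      simp only [Complex.zero_im] at him
      nlinarith
  have harg0 : 0 ≤ (1 + q).arg := by
    rw [arg_nonneg_iff, him]
    positivity
  have hargle : (1 + q).arg ≤ d := by
    rcases eq_or_lt_of_le (by linarith : (0:ℝ) ≤ d) with hd0' | hd0'
    · have hqr : q = (r : ℂ) := by rw [hqe, ← hd0']; simp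
      have h1qr : (1 + q) = ((1 + r : ℝ) : ℂ) := by rw [hqr]; push_cast; ring
      rw [h1qr, arg_ofReal_of_nonneg (by linarith), ← hd0']
    · by_contra hc
      push_neg at hc
      set s := (1 + q).arg with hs
      have hspi : s ≤ Real.pi := arg_le_pi _
      have way1 : ((1 + q) * Complex.exp (((-d : ℝ) : ℂ) * I)).im = - Real.sin d := by
        have hqe2 : q * Complex.exp (((-d : ℝ) : ℂ) * I) = (r : ℂ) := by
          rw [hqe, mul_assoc, ← Complex.exp_add]
          have he0 : (d : ℂ) * I + ((-d : ℝ) : ℂ) * I = 0 := by push_cast; ring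
          rw [he0, Complex.exp_zero, mul_one]
        rw [add_mul, one_mul, hqe2]
        have : ((-d : ℝ) : ℂ) * I = (-d : ℝ) * I := rfl
        rw [Complex.add_im, Complex.ofReal_im, exp_ofReal_mul_I_im']
        rw [Real.sin_neg]; ring
      obtain ⟨ρ, hρ, hrep1q⟩ := hasArg_arg h1q0
      have way2 : ((1 + q) * Complex.exp (((-d : ℝ) : ℂ) * I)).im = ρ * Real.sin (s - d) := by
        rw [← hs] at hrep1q
        rw [hrep1q, mul_assoc, ← Complex.exp_add]
        have he1 : (s : ℂ) * I + ((-d : ℝ) : ℂ) * I = ((s - d : ℝ) : ℂ) * I := by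
          push_cast; ring
        rw [he1, Complex.mul_im, Complex.ofReal_re, Complex.ofReal_im, exp_ofReal_mul_I_im']
        ring
      have hsin : 0 < Real.sin (s - d) :=
        Real.sin_pos_of_pos_of_lt_pi (by linarith) (by linarith [Real.pi_pos])
      have hsd : 0 < Real.sin d := Real.sin_pos_of_pos_of_lt_pi hd0' (by linarith)
      rw [way1] at way2
      nlinarith
  have huvv : v * (1 + q) = u + v := by
    rw [hqdef, mul_add, mul_one, mul_div_cancel₀ _ hv]; ring
  have hrep : HasArg (u + v) (φ₂ + (1 + q).arg) := by
    have hm := hasArg_mul h2 (hasArg_arg h1q0)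
    rwa [huvv] at hm
  have huv0 : u + v ≠ 0 := by
    rw [← huvv]
    exact mul_ne_zero hv h1q0
  rw [hquv]
  exact ⟨huv0, harg0, hargle, hrep⟩

end ComplexHelpers

noncomputable def psi (a : ℕ → ℝ) (n M : ℕ) (z : ℂ) : ℕ → ℝ
  | j =>
    if _h : j < M then j * z.arg
    else if _h2 : 2 ≤ M then
      psi a n M z (j - M) +
        (Polynomial.aeval z (gea a n M (n - j)) /
          Polynomial.aeval z (gea a n M (n - (j - M)))).arg
    else 0
  termination_by j => j
  decreasing_by all_goals omega

lemma psi_lt (a : ℕ → ℝ) (n M : ℕ) (z : ℂ) (j : ℕ) (h : j < M) :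
    psi a n M z j = j * z.arg := by
  rw [psi]; simp [h]

lemma psi_ge (a : ℕ → ℝ) (n M : ℕ) (z : ℂ) (j : ℕ) (h2 : 2 ≤ M) (h : ¬ j < M) :
    psi a n M z j = psi a n M z (j - M) +
      (Polynomial.aeval z (gea a n M (n - j)) /
        Polynomial.aeval z (gea a n M (n - (j - M)))).arg := by
  rw [psi]; simp [h, h2]

section Invariant

variable (a : ℕ → ℝ) (n M : ℕ) (hM : 2 ≤ M) (hMn : M ≤ n)
  (hpos : ∀ i ≤ n, 0 < (gea a n M i).leadingCoeff) (ha0 : a 0 ≠ 0)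
  (z : ℂ) (hz : z ≠ 0) (hz0 : 0 ≤ z.arg) (hzM : z.arg < Real.pi / M)

include hM hMn hpos ha0 hz hz0 hzM

lemma psi_invariant : ∀ j ≤ n,
    HasArg (Polynomial.aeval z (gea a n M (n - j))) (psi a n M z j) ∧
    ∀ m, m ≤ M → m ≤ j →
      -(((M - m : ℕ) : ℝ) * z.arg) ≤ psi a n M z j - psi a n M z (j - m) ∧
      psi a n M z j - psi a n M z (j - m) ≤ (m : ℝ) * z.arg := by
  have hMpos : (0:ℝ) < (M : ℝ) := by exact_mod_cast (show 0 < M by omega)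
  have hMθ : (M : ℝ) * z.arg < Real.pi := by
    rw [div_eq_mul_inv] at hzM
    calc (M : ℝ) * z.arg < (M : ℝ) * (Real.pi * (M:ℝ)⁻¹) := by
          apply mul_lt_mul_of_pos_left hzM hMpos
      _ = Real.pi := by field_simp
  intro j
  induction j using Nat.strong_induction_on with
  | _ j ih =>
    intro hj
    by_cases hjM : j < M
    · -- base case: tail monomials
      have htail := gea_tail a n M hM hMn hpos ha0 (n - j) (by omega) (by omega)
      have hnnj : n - (n - j) = j := by omega
      have hev : Polynomial.aeval z (gea a n M (n - j)) =
          (((gea a n M (n - j)).leadingCoeff : ℝ) : ℂ) * z ^ j := by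
        conv_lhs => rw [htail]
        rw [map_mul, map_pow, Polynomial.aeval_X, Polynomial.aeval_C, hnnj]
        rfl
      constructor
      · rw [hev, psi_lt a n M z j hjM]
        exact hasArg_pos_mul (hpos _ (by omega)) (hasArg_pow (hasArg_arg hz) j)
      · intro m hmM hmj
        rw [psi_lt a n M z j hjM, psi_lt a n M z (j - m) (by omega)]
        have hc1 : ((j - m : ℕ) : ℝ) = (j : ℝ) - m := by
          rw [Nat.cast_sub hmj]
        rw [hc1]
        have hcm : (0:ℝ) ≤ ((M - m : ℕ) : ℝ) * z.arg := by positivity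
        constructor
        · nlinarith [hz0, hcm]
        · nlinarith [hz0]
    · -- inductive step
      push_neg at hjM
      have e1 : n - j + 1 = n - (j - 1) := by omega
      have e2 : n - j + M = n - (j - M) := by omega
      have hstep := gea_step a n M hM hMn hpos ha0 (n - j) (by omega)
      set c : ℝ :=
        (gea a n M (n - j)).leadingCoeff / (gea a n M (n - j + 1)).leadingCoeff with hc
      have hcpos : 0 < c :=
        div_pos (hpos _ (by omega)) (hpos _ (by omega))
      have hev : Polynomial.aeval z (gea a n M (n - j)) =
          ((c : ℝ) : ℂ) * z * Polynomial.aeval z (gea a n M (n - j + 1)) +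
            Polynomial.aeval z (gea a n M (n - j + M)) := by
        conv_lhs => rw [hstep]
        rw [map_add, map_mul, map_mul, Polynomial.aeval_X, Polynomial.aeval_C]
        rfl
      have ih1 := ih (j - 1) (by omega) (by omega)
      have ihM := ih (j - M) (by omega) (by omega)
      have rep1 : HasArg (Polynomial.aeval z (gea a n M (n - j + 1)))
          (psi a n M z (j - 1)) := by rw [e1]; exact ih1.1
      have repM : HasArg (Polynomial.aeval z (gea a n M (n - j + M)))
          (psi a n M z (j - M)) := by rw [e2]; exact ihM.1
      have repu : HasArg (((c : ℝ) : ℂ) * z * Polynomial.aeval z (gea a n M (n - j + 1)))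
          (z.arg + psi a n M z (j - 1)) :=
        hasArg_mul (hasArg_pos_mul hcpos (hasArg_arg hz)) rep1
      -- gap bound from IH at j - 1 with gap M - 1
      have hgap := ih1.2 (M - 1) (by omega) (by omega)
      have eidx : j - 1 - (M - 1) = j - M := by omega
      rw [eidx] at hgap
      have hcast1 : ((M - (M - 1) : ℕ) : ℝ) = 1 := by
        norm_cast; omega
      have hcast2 : ((M - 1 : ℕ) : ℝ) = (M : ℝ) - 1 := by
        rw [Nat.cast_sub (by omega : 1 ≤ M)]; norm_num
      rw [hcast1, hcast2] at hgap
      have hd0 : psi a n M z (j - M) ≤ z.arg + psi a n M z (j - 1) := by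
        have := hgap.1; linarith
      have hdπ : (z.arg + psi a n M z (j - 1)) - psi a n M z (j - M) < Real.pi := by
        have := hgap.2; nlinarith [hz0]
      obtain ⟨hne, ht0, htle, hrep⟩ := hasArg_add repu repM hd0 hdπ
      rw [← hev] at hne ht0 htle hrep
      have hpsij : psi a n M z j = psi a n M z (j - M) +
          (Polynomial.aeval z (gea a n M (n - j)) /
            Polynomial.aeval z (gea a n M (n - j + M))).arg := by
        rw [psi_ge a n M z j hM (by omega), e2]
      -- key bounds on psi j
      have hup : psi a n M z j ≤ z.arg + psi a n M z (j - 1) := by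
        rw [hpsij]; linarith
      have hlo : psi a n M z (j - M) ≤ psi a n M z j := by
        rw [hpsij]; linarith
      constructor
      · rw [hpsij]; exact hrep
      · intro m hmM hmj
        rcases Nat.eq_zero_or_pos m with rfl | hm1
        · simp only [Nat.sub_zero, sub_self, Nat.cast_zero, zero_mul]
          constructor
          · have : (0:ℝ) ≤ ((M - 0 : ℕ) : ℝ) * z.arg := by positivity
            linarith
          · exact le_refl 0
        · constructor
          · -- lower bound via IH at j - m with gap M - m
            have ihm := ih (j - m) (by omega) (by omega)
            have hgap2 := ihm.2 (M - m) (by omega) (by omega)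
            have eidx2 : j - m - (M - m) = j - M := by omega
            rw [eidx2] at hgap2
            have := hgap2.2
            linarith
          · -- upper bound via IH at j - 1 with gap m - 1
            have hgap3 := ih1.2 (m - 1) (by omega) (by omega)
            have eidx3 : j - 1 - (m - 1) = j - m := by omega
            rw [eidx3] at hgap3
            have hcast3 : ((m - 1 : ℕ) : ℝ) = (m : ℝ) - 1 := by
              rw [Nat.cast_sub (by omega : 1 ≤ m)]; norm_num
            rw [hcast3] at hgap3
            have := hgap3.2
            linarith

end Invariant

lemma telescope_Icc (f : ℕ → ℝ) (b : ℕ) (hb : 1 ≤ b) :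
    ∀ c, b ≤ c → (∑ i ∈ Finset.Icc b c, (f i - f (i - 1))) = f c - f (b - 1) := by
  intro c
  induction c with
  | zero => intro h; exact absurd h (by omega)
  | succ c ihc =>
    intro h
    rcases eq_or_lt_of_le h with heq | hlt
    · rw [← heq, Finset.Icc_self, Finset.sum_singleton]
    · have hbc : b ≤ c := by omega
      rw [Finset.sum_Icc_succ_top h, ihc hbc]
      have e : c + 1 - 1 = c := rfl
      rw [e]; ring


/-- If all leading coefficients `h_0, ..., h_n` in the generalized Euclidean algorithm with
step `M` are positive and `0 ≤ arg z < π/M`, then no `f_k` vanishes at `z` and the sums of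
positive and negative arguments of `w_i = f_{n-i}(z)/f_{n-i+1}(z)` over the window
`S(n) = {n-(M-2), ..., n}` are bounded by `π(M-1)/M` in absolute value. -/
theorem ratio_arg_window_sums_bounded
    (n M : ℕ) (a : ℕ → ℝ) (ha0 : a 0 ≠ 0) (hM : 2 ≤ M) (hMn : M ≤ n)
    (hpos : ∀ i ≤ n, 0 < (gea a n M i).leadingCoeff)
    (z : ℂ) (hz : z ≠ 0) (harg0 : 0 ≤ z.arg) (hargM : z.arg < Real.pi / M)
    (w : ℕ → ℂ)
    (hw : ∀ i : ℕ, w i =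
      Polynomial.aeval z (gea a n M (n - i)) / Polynomial.aeval z (gea a n M (n - i + 1))) :
    (∀ k ≤ n, Polynomial.aeval z (gea a n M k) ≠ 0) ∧
    |∑ i ∈ (Finset.Icc (n - (M - 2)) n).filter (fun i => 0 ≤ (w i).arg), (w i).arg| ≤
        Real.pi * (M - 1) / M ∧
    |∑ i ∈ (Finset.Icc (n - (M - 2)) n).filter (fun i => (w i).arg < 0), (w i).arg| ≤
        Real.pi * (M - 1) / M := by
  have hMpos : (0:ℝ) < (M : ℝ) := by exact_mod_cast (show 0 < M by omega)
  have hMθ : (M : ℝ) * z.arg < Real.pi := by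
    rw [div_eq_mul_inv] at hargM
    calc (M : ℝ) * z.arg < (M : ℝ) * (Real.pi * (M:ℝ)⁻¹) :=
          mul_lt_mul_of_pos_left hargM hMpos
      _ = Real.pi := by field_simp
  have hM1 : (1:ℝ) ≤ (M:ℝ) := by exact_mod_cast (show 1 ≤ M by omega)
  have inv := psi_invariant a n M hM hMn hpos ha0 z hz harg0 hargM
  -- nonvanishing
  have hnz : ∀ k ≤ n, Polynomial.aeval z (gea a n M k) ≠ 0 := by
    intro k hk
    have h := (inv (n - k) (by omega)).1
    have e : n - (n - k) = k := by omega
    rw [e] at h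
    exact hasArg_ne_zero h
  refine ⟨hnz, ?_⟩
  -- arguments of the w i
  have hargw : ∀ i, 1 ≤ i → i ≤ n →
      (w i).arg = psi a n M z i - psi a n M z (i - 1) := by
    intro i h1 h2
    have e1 : n - i + 1 = n - (i - 1) := by omega
    have repnum := (inv i h2).1
    have repden : HasArg (Polynomial.aeval z (gea a n M (n - i + 1)))
        (psi a n M z (i - 1)) := by
      rw [e1]; exact (inv (i - 1) (by omega)).1
    have hrep : HasArg (w i) (psi a n M z i - psi a n M z (i - 1)) := by
      rw [hw i]; exact hasArg_div repnum repden
    have hgap := (inv i h2).2 1 (by omega) h1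
    have hcast : ((M - 1 : ℕ) : ℝ) = (M : ℝ) - 1 := by
      rw [Nat.cast_sub (by omega : 1 ≤ M)]; norm_num
    rw [hcast] at hgap
    apply arg_eq_of_hasArg hrep
    · have h3 : ((M:ℝ) - 1) * z.arg < Real.pi := by nlinarith
      have := hgap.1; push_cast at this ⊢; linarith
    · have := hgap.2
      have hpiM : z.arg ≤ Real.pi := by nlinarith [Real.pi_pos]
      push_cast at this; linarith
  have hgapbd : ∀ i, 1 ≤ i → i ≤ n →
      -(((M:ℝ) - 1) * z.arg) ≤ (w i).arg ∧ (w i).arg ≤ z.arg := by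
    intro i h1 h2
    have hgap := (inv i h2).2 1 (by omega) h1
    have hcast : ((M - 1 : ℕ) : ℝ) = (M : ℝ) - 1 := by
      rw [Nat.cast_sub (by omega : 1 ≤ M)]; norm_num
    rw [hcast] at hgap
    rw [hargw i h1 h2]
    constructor
    · exact hgap.1
    · have := hgap.2; push_cast at this; linarith
  set lo : ℕ := n - (M - 2) with hlo
  have hlo1 : 1 ≤ lo := by omega
  have hWcard : (Finset.Icc lo n).card = M - 1 := by
    rw [Nat.card_Icc]; omega
  have hfinal : ((M:ℝ) - 1) * z.arg ≤ Real.pi * ((M:ℝ) - 1) / M := by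
    have h1 : ((M:ℝ) - 1) * z.arg ≤ ((M:ℝ) - 1) * (Real.pi / M) := by
      apply mul_le_mul_of_nonneg_left (le_of_lt hargM) (by linarith [hM1])
    calc ((M:ℝ) - 1) * z.arg ≤ ((M:ℝ) - 1) * (Real.pi / M) := h1
      _ = Real.pi * ((M:ℝ) - 1) / M := by ring
  constructor
  · -- positive-part sum
    set S := (Finset.Icc lo n).filter (fun i => 0 ≤ (w i).arg) with hS
    have hterm : ∀ i ∈ S, (w i).arg ≤ z.arg := by
      intro i hi
      rw [hS, Finset.mem_filter, Finset.mem_Icc] at hi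
      exact (hgapbd i (by omega) (by omega)).2
    have hnonneg : 0 ≤ ∑ i ∈ S, (w i).arg := by
      apply Finset.sum_nonneg
      intro i hi
      rw [hS, Finset.mem_filter] at hi
      exact hi.2
    rw [abs_of_nonneg hnonneg]
    calc ∑ i ∈ S, (w i).arg ≤ S.card • z.arg := Finset.sum_le_card_nsmul S _ _ hterm
      _ = (S.card : ℝ) * z.arg := by rw [nsmul_eq_mul]
      _ ≤ ((M:ℝ) - 1) * z.arg := by
          apply mul_le_mul_of_nonneg_right _ harg0
          have hcard : S.card ≤ M - 1 := hWcard ▸ Finset.card_filter_le _ _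
          have : ((M - 1 : ℕ) : ℝ) = (M:ℝ) - 1 := by
            rw [Nat.cast_sub (by omega : 1 ≤ M)]; norm_num
          rw [← this]; exact_mod_cast hcard
      _ ≤ Real.pi * ((M:ℝ) - 1) / M := hfinal
  · -- negative-part sum
    set S := (Finset.Icc lo n).filter (fun i => (w i).arg < 0) with hS
    rcases Finset.eq_empty_or_nonempty S with hemp | hne
    · rw [hemp, Finset.sum_empty, abs_zero]
      exact div_nonneg (mul_nonneg Real.pi_pos.le (by linarith [hM1])) hMpos.le
    · set i₁ := S.min' hne with hi₁
      set i₂ := S.max' hne with hi₂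
      have hi₁S : i₁ ∈ S := S.min'_mem hne
      have hi₂S : i₂ ∈ S := S.max'_mem hne
      have hi₁W : lo ≤ i₁ ∧ i₁ ≤ n := by
        have := hi₁S; rw [hS, Finset.mem_filter, Finset.mem_Icc] at this; exact this.1
      have hi₂W : lo ≤ i₂ ∧ i₂ ≤ n := by
        have := hi₂S; rw [hS, Finset.mem_filter, Finset.mem_Icc] at this; exact this.1
      have hi₁₂ : i₁ ≤ i₂ := S.min'_le _ hi₂S
      set A := Finset.Icc i₁ i₂ with hA
      have hSA : S ⊆ A := by
        intro i hi
        rw [hA, Finset.mem_Icc]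
        exact ⟨S.min'_le _ hi, S.le_max' _ hi⟩
      have hAW : ∀ i ∈ A, 1 ≤ i ∧ i ≤ n := by
        intro i hi
        rw [hA, Finset.mem_Icc] at hi
        omega
      set L : ℕ := i₂ - i₁ + 1 with hL
      have hLM : L ≤ M - 1 := by omega
      -- telescoping sum over A
      have htele : ∑ i ∈ A, (w i).arg = psi a n M z i₂ - psi a n M z (i₁ - 1) := by
        have hcongr : ∑ i ∈ A, (w i).arg =
            ∑ i ∈ A, (psi a n M z i - psi a n M z (i - 1)) := by
          apply Finset.sum_congr rfl
          intro i hi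
          exact hargw i (hAW i hi).1 (hAW i hi).2
        rw [hcongr, hA]
        exact telescope_Icc (psi a n M z) i₁ (by omega) i₂ hi₁₂
      -- lower bound on telescoped sum via invariant at i₂ with gap L
      have hgapL := (inv i₂ hi₂W.2).2 L (by omega) (by omega)
      have eidx : i₂ - L = i₁ - 1 := by omega
      rw [eidx] at hgapL
      have hsumA : -(((M - L : ℕ) : ℝ) * z.arg) ≤ ∑ i ∈ A, (w i).arg := by
        rw [htele]; exact hgapL.1
      -- the complement terms are each at most θ
      have hsum_split : ∑ i ∈ A \ S, (w i).arg + ∑ i ∈ S, (w i).arg = ∑ i ∈ A, (w i).arg :=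
        Finset.sum_sdiff hSA
      have hcomp_le : ∑ i ∈ A \ S, (w i).arg ≤ ((A \ S).card : ℝ) * z.arg := by
        calc ∑ i ∈ A \ S, (w i).arg ≤ (A \ S).card • z.arg := by
              apply Finset.sum_le_card_nsmul
              intro i hi
              have hiA : i ∈ A := (Finset.mem_sdiff.mp hi).1
              exact (hgapbd i (hAW i hiA).1 (hAW i hiA).2).2
          _ = ((A \ S).card : ℝ) * z.arg := by rw [nsmul_eq_mul]
      have hcardA : A.card = L := by rw [hA, Nat.card_Icc]; omega
      have hcardAS : (A \ S).card ≤ L - 1 := by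
        rw [Finset.card_sdiff_of_subset hSA, hcardA]
        have : 1 ≤ S.card := Finset.card_pos.mpr hne
        omega
      have hSneg : ∑ i ∈ S, (w i).arg ≤ 0 := by
        apply Finset.sum_nonpos
        intro i hi
        rw [hS, Finset.mem_filter] at hi
        exact le_of_lt hi.2
      rw [abs_of_nonpos hSneg]
      -- combine: sum_S = sum_A - sum_comp ≥ -(M-L)θ - (L-1)θ = -(M-1)θ
      have hcast1 : ((M - L : ℕ) : ℝ) = (M:ℝ) - L := by
        rw [Nat.cast_sub (by omega : L ≤ M)]
      have hcast2 : (((A \ S).card : ℕ) : ℝ) ≤ (L:ℝ) - 1 := by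
        have : ((L - 1 : ℕ) : ℝ) = (L:ℝ) - 1 := by
          rw [Nat.cast_sub (by omega : 1 ≤ L)]; norm_num
        rw [← this]; exact_mod_cast hcardAS
      have hcomp_le' : ∑ i ∈ A \ S, (w i).arg ≤ ((L:ℝ) - 1) * z.arg := by
        calc ∑ i ∈ A \ S, (w i).arg ≤ ((A \ S).card : ℝ) * z.arg := hcomp_le
          _ ≤ ((L:ℝ) - 1) * z.arg := mul_le_mul_of_nonneg_right hcast2 harg0
      have hfin : -(((M:ℝ) - 1) * z.arg) ≤ ∑ i ∈ S, (w i).arg := by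
        have h1 : -(((M:ℝ) - L) * z.arg) ≤ ∑ i ∈ A, (w i).arg := by
          rw [← hcast1]; exact hsumA
        linarith
      linarith
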